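/- arXiv:1412.6822 — 2 statements merged into one kernel-verified Lean document; each statement's English description precedes it below -/
import Mathlib

section
/- For every n ∈ ℕ and every letter s ∈ {x,y,z}, the word p⁽ⁿ⁾ s p⁽ⁿ⁾ is a factor of η. Consequently, for each s ∈ {x,y,z} the two-sided sequence ω⁽ˢ⁾ belongs to Ω_τ, and it is the unique element ω of Ω_τ such that ω(0) = s and, for every n ∈ ℕ, both ω(1)ω(2)⋯ω(2ⁿ⁺¹−1) = p⁽ⁿ⁾ and ω(−2ⁿ⁺¹+1)⋯ω(−1) = p⁽ⁿ⁾. -/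
/-- The four-letter alphabet `A = {a, x, y, z}`. -/
inductive A : Type
  | a | x | y | z
  deriving DecidableEq, Repr

/-- The substitution `τ : a ↦ axa, x ↦ y, y ↦ z, z ↦ x`. -/
def tau : A → List A
  | A.a => [A.a, A.x, A.a]
  | A.x => [A.y]
  | A.y => [A.z]
  | A.z => [A.x]

/-- The substitution `τ` extended to finite words by concatenation. -/
def tauW (w : List A) : List A := w.flatMap tau

/-- `pw n = τⁿ(a)`, a word of length `2^(n+1) - 1`. -/
def pw : ℕ → List A
  | 0 => [A.a]
  | n + 1 => tauW (pw n)

/-- The fixed point `η` of `τ`: the unique one-sided infinite word having every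
`τⁿ(a)` as a prefix.  (Since `pw (n+1)` has length `2^(n+2) - 1 > n`, reading its
`n`-th letter is well defined and independent of the choice of a large enough iterate.) -/
def eta (n : ℕ) : A := (pw (n + 1)).getD n A.a

/-- `w` is a (finite) factor of `η`. -/
def IsFactorEta (w : List A) : Prop :=
  ∃ i : ℕ, w = (List.range w.length).map (fun k => eta (i + k))

/-- `Ω_τ`: the set of two-sided sequences all of whose finite factors are factors of `η`. -/
def OmegaTau (ω : ℤ → A) : Prop :=
  ∀ (i : ℤ) (n : ℕ), IsFactorEta ((List.range n).map (fun k => ω (i + k)))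

/-- The special two-sided sequence `ω⁽ˢ⁾`, with `ω⁽ˢ⁾(0) = s` and
`ω⁽ˢ⁾(k) = η(|k| - 1)` for `k ≠ 0`. -/
def omegaS (s : A) : ℤ → A := fun k => if k = 0 then s else eta (k.natAbs - 1)

/- auxiliary -/
def nxt : A → A
  | A.x => A.y
  | A.y => A.z
  | A.z => A.x
  | A.a => A.a

def cc : ℕ → A
  | 0 => A.x
  | n + 1 => nxt (cc n)

lemma cc_ne_a : ∀ n, cc n ≠ A.a := by
  intro n
  induction n with
  | zero => simp [cc]
  | succ n ih => cases h : cc n <;> simp [cc, nxt, h] <;> exact (ih h).elim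

lemma tau_cc (n : ℕ) : tau (cc n) = [cc (n + 1)] := by
  have h := cc_ne_a n
  cases hc : cc n <;> simp [cc, nxt, tau, hc] at * 

lemma tauW_append (u v : List A) : tauW (u ++ v) = tauW u ++ tauW v :=
  List.flatMap_append

lemma pw_succ (n : ℕ) : pw (n + 1) = pw n ++ [cc n] ++ pw n := by
  induction n with
  | zero => rfl
  | succ n ih =>
    calc pw (n+2) = tauW (pw n ++ [cc n] ++ pw n) := by rw [← ih]; rfl
      _ = tauW (pw n) ++ tauW [cc n] ++ tauW (pw n) := by
            rw [tauW_append, tauW_append]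
      _ = pw (n+1) ++ [cc (n+1)] ++ pw (n+1) := by
            rw [show tauW [cc n] = [cc (n+1)] from by simp [tauW, tau_cc]]; rfl

lemma pw_length (n : ℕ) : (pw n).length = 2 ^ (n + 1) - 1 := by
  induction n with
  | zero => rfl
  | succ n ih =>
    rw [pw_succ, List.length_append, List.length_append, ih]
    have : 1 ≤ 2 ^ (n+1) := Nat.one_le_two_pow
    simp [List.length_cons]
    omega

lemma pw_reverse (n : ℕ) : (pw n).reverse = pw n := by
  induction n with
  | zero => rfl
  | succ n ih => rw [pw_succ]; simp [ih]

lemma pw_prefix {n m : ℕ} (h : n ≤ m) : pw n <+: pw m := by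
  induction m with
  | zero => rw [Nat.le_zero.mp h]
  | succ m ih =>
    rcases Nat.lt_or_ge n (m+1) with h' | h'
    · exact (ih (Nat.lt_succ_iff.mp h')).trans
        ⟨[cc m] ++ pw m, by rw [pw_succ, List.append_assoc]⟩
    · rw [Nat.le_antisymm h h']

lemma pw_suffix {n m : ℕ} (h : n ≤ m) : pw n <:+ pw m := by
  induction m with
  | zero => rw [Nat.le_zero.mp h]
  | succ m ih =>
    rcases Nat.lt_or_ge n (m+1) with h' | h'
    · exact (ih (Nat.lt_succ_iff.mp h')).trans
        ⟨pw m ++ [cc m], by rw [pw_succ]⟩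
    · rw [Nat.le_antisymm h h']

lemma k_lt_pw_len (k : ℕ) : k < (pw (k+1)).length := by
  have h1 : k < 2 ^ (k + 1 + 1) :=
    lt_of_lt_of_le (Nat.lt_two_pow_self (n := k)) (Nat.pow_le_pow_right (by norm_num) (by omega))
  have h0 := Nat.lt_two_pow_self (n := k)
  rw [pw_length]; omega

lemma pw_getElem_eta {n k : ℕ} (h : k < (pw n).length) : (pw n)[k] = eta k := by
  have hk1 : k < (pw (k+1)).length := k_lt_pw_len k
  have h1 := (pw_prefix (le_max_left n (k+1))).getElem h
  have h2 := (pw_prefix (le_max_right n (k+1))).getElem hk1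
  rw [eta, List.getD_eq_getElem _ _ hk1, h1, h2]

lemma eta_pw {n k : ℕ} (h : k < (pw n).length) : (pw n).getD k A.a = eta k := by
  rw [List.getD_eq_getElem _ _ h, pw_getElem_eta h]

lemma eta_palin {n k : ℕ} (h : k < (pw n).length) :
    eta ((pw n).length - 1 - k) = eta k := by
  have h' : (pw n).length - 1 - k < (pw n).length := by omega
  rw [← eta_pw h', ← eta_pw h]
  have hr : k < (pw n).reverse.length := by simpa using h
  have : (pw n).reverse.getD k A.a = (pw n).getD ((pw n).length - 1 - k) A.a := by
    rw [List.getD_eq_getElem _ _ hr, List.getD_eq_getElem _ _ h', List.getElem_reverse]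
  rw [← this, pw_reverse]

lemma isFactorEta_iff {w : List A} :
    IsFactorEta w ↔ ∃ i, ∀ k, (hk : k < w.length) → w.getD k A.a = eta (i + k) := by
  constructor
  · rintro ⟨i, hi⟩
    refine ⟨i, fun k hk => ?_⟩
    have hk' : k < (List.map (fun k => eta (i + k)) (List.range w.length)).length := by
      simpa using hk
    calc w.getD k A.a
        = (List.map (fun k => eta (i + k)) (List.range w.length)).getD k A.a := by
          rw [← hi]
      _ = eta (i + k) := by
          rw [List.getD_eq_getElem _ _ hk', List.getElem_map, List.getElem_range]
  · rintro ⟨i, hi⟩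
    refine ⟨i, List.ext_getElem (by simp) fun k h1 h2 => ?_⟩
    rw [← List.getD_eq_getElem _ A.a h1, hi k h1]
    simp

lemma isFactorEta_of_infix {w : List A} {M : ℕ} (h : w <:+: pw M) : IsFactorEta w := by
  obtain ⟨u, v, huv⟩ := h
  refine isFactorEta_iff.mpr ⟨u.length, fun k hk => ?_⟩
  have hlen : u.length + k < (pw M).length := by
    rw [← huv]; simp; omega
  rw [← eta_pw hlen, ← huv]
  rw [List.getD_append _ _ _ _ (by simp; omega),
    List.getD_append_right _ _ _ _ (by omega)]
  congr 1
  omega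

lemma key_infix {n m : ℕ} (h : n ≤ m) : pw n ++ [cc m] ++ pw n <:+: pw (m + 1) := by
  obtain ⟨u, hu⟩ := pw_suffix h
  obtain ⟨v, hv⟩ := pw_prefix h
  refine ⟨u, v, ?_⟩
  rw [pw_succ m]
  nth_rewrite 1 [← hu]
  rw [← hv]
  simp [List.append_assoc]

lemma cc_surj (n : ℕ) {s : A} (hs : s ≠ A.a) : ∃ m, n ≤ m ∧ cc m = s := by
  have h0 := cc_ne_a n
  cases h : cc n with
  | a => exact (h0 h).elim
  | x =>
    cases s with
    | a => exact (hs rfl).elim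
    | x => exact ⟨n, le_refl n, h⟩
    | y => exact ⟨n+1, by omega, by simp [cc, nxt, h]⟩
    | z => exact ⟨n+2, by omega, by simp [cc, nxt, h]⟩
  | y =>
    cases s with
    | a => exact (hs rfl).elim
    | x => exact ⟨n+2, by omega, by simp [cc, nxt, h]⟩
    | y => exact ⟨n, le_refl n, h⟩
    | z => exact ⟨n+1, by omega, by simp [cc, nxt, h]⟩
  | z =>
    cases s with
    | a => exact (hs rfl).elim
    | x => exact ⟨n+1, by omega, by simp [cc, nxt, h]⟩
    | y => exact ⟨n+2, by omega, by simp [cc, nxt, h]⟩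
    | z => exact ⟨n, le_refl n, h⟩

lemma factor_pw_s_pw (n : ℕ) {s : A} (hs : s ≠ A.a) :
    IsFactorEta (pw n ++ [s] ++ pw n) := by
  obtain ⟨m, hm, hcm⟩ := cc_surj n hs
  exact isFactorEta_of_infix (hcm ▸ key_infix hm)

lemma getD_map_range {f : ℕ → A} {L k : ℕ} (hk : k < L) :
    ((List.range L).map f).getD k A.a = f k := by
  have hk' : k < ((List.range L).map f).length := by simpa using hk
  rw [List.getD_eq_getElem _ _ hk', List.getElem_map, List.getElem_range]

lemma len_pw_ge (n : ℕ) : n + 1 ≤ (pw n).length := by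
  have := Nat.lt_two_pow_self (n := n + 1)
  rw [pw_length]; omega

lemma omegaS_getD (s : A) (n : ℕ) {t : ℕ} (ht : t ≤ 2 * (pw n).length) :
    omegaS s ((t : ℤ) - (pw n).length) = (pw n ++ [s] ++ pw n).getD t A.a := by
  rcases lt_trichotomy t (pw n).length with h | h | h
  · have hne : ((t:ℤ) - (pw n).length) ≠ 0 := by omega
    have habs : ((t:ℤ) - (pw n).length).natAbs - 1 = (pw n).length - 1 - t := by omega
    rw [show omegaS s ((t:ℤ) - (pw n).length)
        = eta (((t:ℤ) - (pw n).length).natAbs - 1) from if_neg hne, habs]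
    rw [List.getD_append _ _ _ _ (by simp; omega), List.getD_append _ _ _ _ h,
      eta_pw h]
    exact eta_palin h
  · rw [List.getD_append _ _ _ _ (by simp; omega),
      List.getD_append_right _ _ _ _ (le_of_eq h.symm), h]
    simp [omegaS, show ((t:ℤ) - (pw n).length) = 0 by omega]
  · have hne : ((t:ℤ) - (pw n).length) ≠ 0 := by omega
    have habs : ((t:ℤ) - (pw n).length).natAbs - 1 = t - (pw n).length - 1 := by omega
    rw [show omegaS s ((t:ℤ) - (pw n).length)
        = eta (((t:ℤ) - (pw n).length).natAbs - 1) from if_neg hne, habs]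
    have hlen2 : (pw n ++ [s]).length ≤ t := by simp; omega
    rw [List.getD_append_right _ _ _ _ hlen2]
    have hlt : t - (pw n ++ [s]).length < (pw n).length := by simp; omega
    rw [eta_pw hlt]
    congr 1
    simp
    omega

lemma flatMap_sing (l : List ℕ) :
    (l.flatMap fun a : ℕ => [(a:ℤ)]) = List.map (fun a : ℕ => (a:ℤ)) l := by
  induction l with
  | nil => rfl
  | cons h t ih => rw [List.flatMap_cons, ih]; rfl

lemma shapeA (g : ℤ → A) (n : ℕ) :
    (List.map g (do let a ← List.range n; pure ((a : ℤ))))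
      = List.map (fun k : ℕ => g (k:ℤ)) (List.range n) := by
  have h : (do let a ← List.range n; pure ((a:ℤ)))
      = List.map (fun a : ℕ => (a:ℤ)) (List.range n) := flatMap_sing (List.range n)
  rw [h, List.map_map]
  rfl

lemma two_pow_cast (n : ℕ) : ((2:ℤ)) ^ (n+1) = ((pw n).length : ℤ) + 1 := by
  rw [pw_length]
  have h : (1:ℕ) ≤ 2 ^ (n+1) := Nat.one_le_two_pow
  push_cast [h]
  ring

lemma omegaTau_omegaS {s : A} (hs : s ≠ A.a) : OmegaTau (omegaS s) := by
  intro i len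
  rw [shapeA]
  set n := i.natAbs + len with hn
  have hL : i.natAbs + len ≤ (pw n).length := le_trans (by omega) (len_pw_ge n)
  obtain ⟨i₀, hfac⟩ := isFactorEta_iff.mp (factor_pw_s_pw n hs)
  have hWlen : (pw n ++ [s] ++ pw n).length = 2 * (pw n).length + 1 := by simp; omega
  set j0 : ℕ := (i + (pw n).length).toNat with hj0
  have hiL : (0:ℤ) ≤ i + (pw n).length := by
    have : (i.natAbs : ℤ) ≤ ((pw n).length : ℤ) := by exact_mod_cast le_trans (by omega) hL
    omega
  have hj0' : (j0 : ℤ) = i + (pw n).length := Int.toNat_of_nonneg hiL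
  refine isFactorEta_iff.mpr ⟨i₀ + j0, fun k hk => ?_⟩
  have hk' : k < len := by simpa using hk
  have hkt : j0 + k ≤ 2 * (pw n).length := by omega
  have harg : i + (k:ℤ) = ((j0 + k : ℕ) : ℤ) - (pw n).length := by push_cast; omega
  rw [getD_map_range hk']
  show omegaS s (i + (k:ℤ)) = eta (i₀ + j0 + k)
  rw [harg, omegaS_getD s n hkt, hfac (j0 + k) (by omega), Nat.add_assoc]

lemma omegaS_right (s : A) (n : ℕ) :
    (List.range (2 ^ (n + 1) - 1)).map (fun k => omegaS s (1 + k)) = pw n := by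
  rw [shapeA]
  refine List.ext_getElem (by simp [pw_length]) fun k h1 h2 => ?_
  rw [List.getElem_map, List.getElem_range, pw_getElem_eta h2]
  show omegaS s (1 + (k:ℤ)) = eta k
  have hne : (1 + (k:ℤ)) ≠ 0 := by omega
  rw [show omegaS s (1 + (k:ℤ)) = eta ((1 + (k:ℤ)).natAbs - 1) from if_neg hne]
  congr 1
  omega

lemma omegaS_left (s : A) (n : ℕ) :
    (List.range (2 ^ (n + 1) - 1)).map
      (fun k => omegaS s (-(2 ^ (n + 1) : ℤ) + 1 + k)) = pw n := by
  rw [shapeA]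
  refine List.ext_getElem (by simp [pw_length]) fun k h1 h2 => ?_
  rw [List.getElem_map, List.getElem_range, pw_getElem_eta h2, ← eta_palin h2]
  show omegaS s (-(2 ^ (n + 1) : ℤ) + 1 + (k:ℤ)) = eta ((pw n).length - 1 - k)
  have hcast := two_pow_cast n
  have hk2 : k < (pw n).length := h2
  have hne : (-(2 ^ (n + 1) : ℤ) + 1 + (k:ℤ)) ≠ 0 := by rw [hcast]; omega
  rw [show omegaS s (-(2 ^ (n + 1) : ℤ) + 1 + (k:ℤ))
      = eta ((-(2 ^ (n + 1) : ℤ) + 1 + (k:ℤ)).natAbs - 1) from if_neg hne, hcast]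
  congr 1
  omega

lemma unique_aux {s : A} {ω : ℤ → A} (h0 : ω 0 = s)
    (hc : ∀ n : ℕ,
      (List.range (2 ^ (n + 1) - 1)).map (fun k => ω (1 + k)) = pw n ∧
      (List.range (2 ^ (n + 1) - 1)).map
        (fun k => ω (-(2 ^ (n + 1) : ℤ) + 1 + k)) = pw n) :
    ω = omegaS s := by
  funext j
  rcases lt_trichotomy j 0 with hj | hj | hj
  · -- j < 0
    set m := j.natAbs with hm
    have hm1 : 1 ≤ m := by omega
    have hmL : m ≤ (pw m).length := le_trans (by omega) (len_pw_ge m)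
    set k := (pw m).length - m with hk
    have hkL : k < (pw m).length := by omega
    have h2 := (hc m).2
    rw [shapeA] at h2
    have h3 := congrArg (fun l => l.getD k A.a) h2
    have hkR : k < 2 ^ (m + 1) - 1 := by rw [← pw_length]; exact hkL
    rw [getD_map_range hkR] at h3
    have h4 : ω (-(2 ^ (m + 1) : ℤ) + 1 + (k:ℤ)) = eta k := by
      rw [h3, eta_pw hkL]
    have hcast := two_pow_cast m
    have harg : j = -(2 ^ (m + 1) : ℤ) + 1 + (k:ℤ) := by
      rw [hcast]
      have : ((k:ℤ)) = ((pw m).length : ℤ) - m := by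
        have : (m:ℤ) ≤ ((pw m).length : ℤ) := by exact_mod_cast hmL
        omega
      omega
    rw [harg, h4]
    have hne : (-(2 ^ (m + 1) : ℤ) + 1 + (k:ℤ)) ≠ 0 := by rw [← harg]; omega
    rw [show omegaS s (-(2 ^ (m + 1) : ℤ) + 1 + (k:ℤ))
        = eta ((-(2 ^ (m + 1) : ℤ) + 1 + (k:ℤ)).natAbs - 1) from if_neg hne]
    rw [← harg]
    rw [show j.natAbs - 1 = m - 1 from by omega]
    rw [← eta_palin (show m - 1 < (pw m).length from by omega)]
    congr 1
    omega
  · rw [hj]; simp [omegaS, h0.symm]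
  · -- j > 0
    set k := j.toNat - 1 with hk
    have h1 := (hc k).1
    rw [shapeA] at h1
    have hkR : k < 2 ^ (k + 1) - 1 := by
      have := len_pw_ge k; rw [pw_length] at this; omega
    have h3 := congrArg (fun l => l.getD k A.a) h1
    rw [getD_map_range hkR] at h3
    have hkL : k < (pw k).length := by rw [pw_length]; exact hkR
    have h4 : ω (1 + (k:ℤ)) = eta k := by rw [h3, eta_pw hkL]
    have harg : j = 1 + (k:ℤ) := by omega
    rw [harg, h4]
    have hne : (1 + (k:ℤ)) ≠ 0 := by omega
    rw [show omegaS s (1 + (k:ℤ))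
        = eta ((1 + (k:ℤ)).natAbs - 1) from if_neg hne]
    congr 1
    omega

/-- For every `n` and every `s ∈ {x,y,z}`, the word `p⁽ⁿ⁾ s p⁽ⁿ⁾` is a factor of `η`;
consequently `ω⁽ˢ⁾` belongs to `Ω_τ` and is the unique element `ω` of `Ω_τ` with
`ω(0) = s`, `ω(1)⋯ω(2^(n+1)-1) = p⁽ⁿ⁾` and `ω(-2^(n+1)+1)⋯ω(-1) = p⁽ⁿ⁾` for all `n`. -/
theorem special_words_omegaS :
    (∀ (n : ℕ) (s : A), s ∈ ({A.x, A.y, A.z} : Set A) →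
      IsFactorEta (pw n ++ [s] ++ pw n)) ∧
    (∀ s ∈ ({A.x, A.y, A.z} : Set A),
      OmegaTau (omegaS s) ∧
      omegaS s 0 = s ∧
      (∀ n : ℕ,
        (List.range (2 ^ (n + 1) - 1)).map (fun k => omegaS s (1 + k)) = pw n ∧
        (List.range (2 ^ (n + 1) - 1)).map
            (fun k => omegaS s (-(2 ^ (n + 1) : ℤ) + 1 + k)) = pw n) ∧
      (∀ ω : ℤ → A, OmegaTau ω → ω 0 = s →
        (∀ n : ℕ,
          (List.range (2 ^ (n + 1) - 1)).map (fun k => ω (1 + k)) = pw n ∧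
          (List.range (2 ^ (n + 1) - 1)).map
              (fun k => ω (-(2 ^ (n + 1) : ℤ) + 1 + k)) = pw n) →
        ω = omegaS s)) := by
  have hXA : ∀ s ∈ ({A.x, A.y, A.z} : Set A), s ≠ A.a := by
    intro s hs
    simp only [Set.mem_insert_iff, Set.mem_singleton_iff] at hs
    rcases hs with rfl | rfl | rfl <;> simp
  refine ⟨fun n s hs => factor_pw_s_pw n (hXA s hs), fun s hs => ?_⟩
  have hsa := hXA s hs
  exact ⟨omegaTau_omegaS hsa, by simp [omegaS],
    fun n => ⟨omegaS_right s n, omegaS_left s n⟩,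
    fun ω hΩ h0 hc => unique_aux h0 hc⟩
end

section
/- Let ω ∈ Ω_τ and let ω̃ be its reflection, ω̃(n) := ω(1−n). If the shift-orbits of ω and ω̃ intersect, i.e., if there exist integers n, m with Tⁿω = Tᵐω̃, then ω is symmetric around some point: there exist p ∈ ℤ and s ∈ {x,y,z} such that ω(n) = ω⁽ˢ⁾(n−p) for all n ∈ ℤ. -/
-- auxiliary defs
def sig : A → A
  | A.a => A.a
  | A.x => A.y
  | A.y => A.z
  | A.z => A.x

def g3 (v : ℕ) : A := if v % 3 = 0 then A.x else if v % 3 = 1 then A.y else A.z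

def f (n : ℕ) : A := if n % 2 = 0 then A.a else g3 (padicValNat 2 ((n + 1) / 2))

lemma g3_ne_a (v : ℕ) : g3 v ≠ A.a := by
  unfold g3; split <;> [skip; split] <;> simp

lemma g3_succ (v : ℕ) : g3 (v + 1) = sig (g3 v) := by
  have h : v % 3 = 0 ∨ v % 3 = 1 ∨ v % 3 = 2 := by omega
  have h1 : (v + 1) % 3 = (v % 3 + 1) % 3 := by omega
  rcases h with h | h | h <;> simp [g3, h1, h, sig]

lemma g3_succ_ne (v : ℕ) : g3 v ≠ g3 (v + 1) := by
  have h : v % 3 = 0 ∨ v % 3 = 1 ∨ v % 3 = 2 := by omega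
  have h1 : (v + 1) % 3 = (v % 3 + 1) % 3 := by omega
  rcases h with h | h | h <;> simp [g3, h1, h]

lemma g3_eq_x_iff (v : ℕ) : g3 v = A.x ↔ v % 3 = 0 := by
  have h : v % 3 = 0 ∨ v % 3 = 1 ∨ v % 3 = 2 := by omega
  rcases h with h | h | h <;> simp [g3, h]

lemma f_even (k : ℕ) : f (2 * k) = A.a := by simp [f, Nat.mul_mod_right]

lemma f_odd (k : ℕ) : f (2 * k + 1) = g3 (padicValNat 2 (k + 1)) := by
  have h2 : (2 * k + 1) % 2 = 1 := by omega
  have h3 : (2 * k + 1 + 1) / 2 = k + 1 := by omega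
  simp [f, h2, h3]

lemma f_odd1 (k : ℕ) : f (4 * k + 1) = A.x := by
  have : (4 * k + 1) = 2 * (2 * k) + 1 := by ring
  rw [this, f_odd, padicValNat.eq_zero_of_not_dvd (by omega)]
  simp [g3]

lemma f_odd3 (k : ℕ) : f (4 * k + 3) = sig (f (2 * k + 1)) := by
  have h : (4 * k + 3) = 2 * (2 * k + 1) + 1 := by ring
  rw [h, f_odd, f_odd]
  have h2 : (2 * k + 1 + 1) = 2 * (k + 1) := by ring
  rw [h2, padicValNat.mul (by norm_num) (by omega), padicValNat.self (by norm_num)]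
  rw [add_comm 1, g3_succ]

lemma tau_a : tau A.a = [A.a, A.x, A.a] := rfl

lemma tau_g3 (v : ℕ) : tau (g3 v) = [sig (g3 v)] := by
  unfold g3; split <;> [skip; split] <;> rfl

lemma tau_pref : ∀ j : ℕ, tauW ((List.range (2 * j + 1)).map f) = (List.range (4 * j + 3)).map f := by
  intro j
  induction j with
  | zero =>
    have h0 : f 0 = A.a := f_even 0
    have h1 : f 1 = A.x := f_odd1 0
    have h2 : f 2 = A.a := f_even 1
    simp [List.range_succ, tauW, tau, h0, h1, h2]
  | succ j ih =>
    have L1 : List.range (2 * j + 1 + 2) = List.range (2 * j + 1) ++ [2 * j + 1, 2 * j + 1 + 1] := by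
      rw [List.range_add]; simp [List.range_succ]
    have L2 : List.range (4 * j + 3 + 4)
        = List.range (4 * j + 3) ++ [4 * j + 3, 4 * j + 3 + 1, 4 * j + 3 + 2, 4 * j + 3 + 3] := by
      rw [List.range_add]; simp [List.range_succ]
    have e1 : 2 * (j + 1) + 1 = 2 * j + 1 + 2 := by ring
    have e2 : 4 * (j + 1) + 3 = 4 * j + 3 + 4 := by ring
    rw [e1, e2, L1, L2]
    unfold tauW at ih ⊢
    rw [List.map_append, List.flatMap_append, ih, List.map_append]
    have hodd : f (2 * j + 1) = g3 (padicValNat 2 (j + 1)) := f_odd j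
    have h1 : f (2 * j + 1 + 1) = A.a := by
      have := f_even (j + 1); rw [show 2 * (j + 1) = 2 * j + 1 + 1 by ring] at this; exact this
    have h2 : f (4 * j + 3) = sig (f (2 * j + 1)) := f_odd3 j
    have h3 : f (4 * j + 3 + 1) = A.a := by
      have := f_even (2 * j + 2); rw [show 2 * (2 * j + 2) = 4 * j + 3 + 1 by ring] at this; exact this
    have h4 : f (4 * j + 3 + 2) = A.x := by
      have := f_odd1 (j + 1); rw [show 4 * (j + 1) + 1 = 4 * j + 3 + 2 by ring] at this; exact this
    have h5 : f (4 * j + 3 + 3) = A.a := by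
      have := f_even (2 * j + 3); rw [show 2 * (2 * j + 3) = 4 * j + 3 + 3 by ring] at this; exact this
    simp [h1, h2, h3, h4, h5, hodd, tau_g3, tau_a]

lemma pw_eq : ∀ m : ℕ, pw m = (List.range (2 ^ (m + 1) - 1)).map f := by
  intro m
  induction m with
  | zero => simp [pw, List.range_succ, f_even 0]
  | succ m ih =>
    have h1 : 1 ≤ 2 ^ m := Nat.one_le_two_pow
    have e1 : 2 ^ (m + 1) - 1 = 2 * (2 ^ m - 1) + 1 := by
      have : 2 ^ (m+1) = 2 * 2 ^ m := by ring
      omega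
    have e2 : 2 ^ (m + 1 + 1) - 1 = 4 * (2 ^ m - 1) + 3 := by
      have : 2 ^ (m+1+1) = 4 * 2 ^ m := by ring
      omega
    show tauW (pw m) = _
    rw [ih, e1, e2, tau_pref]

lemma eta_eq_f (n : ℕ) : eta n = f n := by
  have hl : n < 2 ^ (n + 2) - 1 := by
    have := Nat.lt_two_pow_self (n := n)
    have : 2 ^ n < 2 ^ (n + 2) := by
      apply Nat.pow_lt_pow_right (by norm_num); omega
    omega
  unfold eta
  rw [pw_eq (n + 1)]
  rw [List.getD_eq_getElem _ _ (by simpa using hl)]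
  simp

lemma eta_even (k : ℕ) : eta (2 * k) = A.a := by rw [eta_eq_f]; exact f_even k

lemma eta_odd (k : ℕ) : eta (2 * k + 1) = g3 (padicValNat 2 (k + 1)) := by
  rw [eta_eq_f]; exact f_odd k

lemma eta_a_iff (t : ℕ) : eta t = A.a ↔ t % 2 = 0 := by
  rcases Nat.even_or_odd t with ⟨k, hk⟩ | ⟨k, hk⟩
  · subst hk; rw [show k + k = 2 * k by ring, eta_even]
    have h0 : (2 * k) % 2 = 0 := by omega
    simp [h0]
  · subst hk; rw [eta_odd]
    exact ⟨fun h => absurd h (g3_ne_a _), fun h => absurd h (by omega)⟩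

lemma pv_eq {n u : ℕ} (h1 : 2 ^ u ∣ n) (h2 : ¬ 2 ^ (u + 1) ∣ n) : padicValNat 2 n = u := by
  have hn : n ≠ 0 := by rintro rfl; exact h2 (dvd_zero _)
  have a1 : u ≤ padicValNat 2 n := (padicValNat_dvd_iff_le hn).mp h1
  have a2 : ¬ (u + 1 ≤ padicValNat 2 n) := fun h => h2 ((padicValNat_dvd_iff_le hn).mpr h)
  omega

lemma pv_eq0 {m : ℕ} (h : m % 2 = 1) : padicValNat 2 m = 0 :=
  padicValNat.eq_zero_of_not_dvd (by omega)

lemma pv_eq1 {m : ℕ} (h : m % 4 = 2) : padicValNat 2 m = 1 :=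
  pv_eq (by rw [pow_one]; omega) (by rw [show (2:ℕ)^(1+1) = 4 by norm_num]; omega)

lemma pv_eq2 {m : ℕ} (h : m % 8 = 4) : padicValNat 2 m = 2 :=
  pv_eq (by rw [show (2:ℕ)^2 = 4 by norm_num]; omega)
    (by rw [show (2:ℕ)^(2+1) = 8 by norm_num]; omega)

lemma pv_mul_pow (v m : ℕ) (hm : m ≠ 0) :
    padicValNat 2 (2 ^ v * m) = v + padicValNat 2 m := by
  rw [padicValNat.mul (by positivity) hm, padicValNat.prime_pow]

lemma pv_add (N r : ℕ) (hr : 1 ≤ r) (hrv : r < 2 ^ padicValNat 2 N) :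
    padicValNat 2 (N + r) = padicValNat 2 r := by
  set v := padicValNat 2 N with hv
  set u := padicValNat 2 r with hu
  have hur : 2 ^ u ∣ r := pow_padicValNat_dvd
  have hur2 : ¬ 2 ^ (u + 1) ∣ r := pow_succ_padicValNat_not_dvd (by omega)
  have huv : u + 1 ≤ v := by
    by_contra hcon
    have h1 : v ≤ u := by omega
    have h2 : 2 ^ v ∣ r := dvd_trans (pow_dvd_pow 2 h1) hur
    have := Nat.le_of_dvd (by omega) h2
    omega
  have hNv : 2 ^ v ∣ N := pow_padicValNat_dvd
  have hN1 : 2 ^ (u + 1) ∣ N := dvd_trans (pow_dvd_pow 2 huv) hNv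
  have hNu : 2 ^ u ∣ N := dvd_trans (pow_dvd_pow 2 (by omega)) hNv
  apply pv_eq
  · exact Nat.dvd_add hNu hur
  · intro hdvd
    exact hur2 ((Nat.dvd_add_right hN1).mp hdvd)

lemma V1 (v M : ℕ) (hM : M % 2 = 1) (hM1 : M ≠ 1) :
    ∃ r, 1 ≤ r ∧ r ≤ 3 * 2 ^ v ∧
      g3 (padicValNat 2 (2 ^ v * M + r)) ≠ g3 (padicValNat 2 (2 ^ v * M - r)) := by
  have hp : (1:ℕ) ≤ 2 ^ v := Nat.one_le_two_pow
  have h8 : M % 8 = 1 ∨ M % 8 = 3 ∨ M % 8 = 5 ∨ M % 8 = 7 := by omega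
  rcases h8 with h8 | h8 | h8 | h8
  · -- M = 8t+9
    obtain ⟨t, rfl⟩ : ∃ t, M = 8 * t + 9 := ⟨(M - 9) / 8, by omega⟩
    refine ⟨3 * 2 ^ v, by omega, le_refl _, ?_⟩
    have e1 : 2 ^ v * (8 * t + 9) + 3 * 2 ^ v = 2 ^ v * (8 * t + 12) := by ring
    have e2 : 2 ^ v * (8 * t + 9) - 3 * 2 ^ v = 2 ^ v * (8 * t + 6) :=
      Nat.sub_eq_of_eq_add (by ring)
    rw [e1, e2, pv_mul_pow _ _ (by omega), pv_mul_pow _ _ (by omega),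
      pv_eq2 (by omega), pv_eq1 (by omega)]
    exact Ne.symm (g3_succ_ne (v + 1))
  · obtain ⟨t, rfl⟩ : ∃ t, M = 8 * t + 3 := ⟨(M - 3) / 8, by omega⟩
    refine ⟨2 ^ v, by omega, by omega, ?_⟩
    have e1 : 2 ^ v * (8 * t + 3) + 2 ^ v = 2 ^ v * (8 * t + 4) := by ring
    have e2 : 2 ^ v * (8 * t + 3) - 2 ^ v = 2 ^ v * (8 * t + 2) :=
      Nat.sub_eq_of_eq_add (by ring)
    rw [e1, e2, pv_mul_pow _ _ (by omega), pv_mul_pow _ _ (by omega),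
      pv_eq2 (by omega), pv_eq1 (by omega)]
    exact Ne.symm (g3_succ_ne (v + 1))
  · obtain ⟨t, rfl⟩ : ∃ t, M = 8 * t + 5 := ⟨(M - 5) / 8, by omega⟩
    refine ⟨2 ^ v, by omega, by omega, ?_⟩
    have e1 : 2 ^ v * (8 * t + 5) + 2 ^ v = 2 ^ v * (8 * t + 6) := by ring
    have e2 : 2 ^ v * (8 * t + 5) - 2 ^ v = 2 ^ v * (8 * t + 4) :=
      Nat.sub_eq_of_eq_add (by ring)
    rw [e1, e2, pv_mul_pow _ _ (by omega), pv_mul_pow _ _ (by omega),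
      pv_eq1 (by omega), pv_eq2 (by omega)]
    exact g3_succ_ne (v + 1)
  · obtain ⟨t, rfl⟩ : ∃ t, M = 8 * t + 7 := ⟨(M - 7) / 8, by omega⟩
    refine ⟨3 * 2 ^ v, by omega, le_refl _, ?_⟩
    have e1 : 2 ^ v * (8 * t + 7) + 3 * 2 ^ v = 2 ^ v * (8 * t + 10) := by ring
    have e2 : 2 ^ v * (8 * t + 7) - 3 * 2 ^ v = 2 ^ v * (8 * t + 4) :=
      Nat.sub_eq_of_eq_add (by ring)
    rw [e1, e2, pv_mul_pow _ _ (by omega), pv_mul_pow _ _ (by omega),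
      pv_eq1 (by omega), pv_eq2 (by omega)]
    exact g3_succ_ne (v + 1)

lemma V2 (q : ℕ) (hq : 2 ≤ q) :
    ∃ r, 1 ≤ r ∧ r ≤ 2 ∧
      g3 (padicValNat 2 (q + r)) ≠ g3 (padicValNat 2 (q + 1 - r)) := by
  by_cases h2 : q % 2 = 0
  · by_cases h3 : padicValNat 2 q % 3 = 0
    · have hv : 1 ≤ padicValNat 2 q :=
        (padicValNat_dvd_iff_le (by omega)).mp (by rw [pow_one]; omega)
      have hv3 : 3 ≤ padicValNat 2 q := by omega
      have h8 : 2 ^ 3 ∣ q := (padicValNat_dvd_iff_le (by omega)).mpr hv3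
      rw [show (2:ℕ)^3 = 8 by norm_num] at h8
      have h8' : q % 8 = 0 := by omega
      refine ⟨2, by omega, by omega, ?_⟩
      rw [pv_eq1 (m := q + 2) (by omega), pv_eq0 (m := q + 1 - 2) (by omega)]
      decide
    · refine ⟨1, le_refl _, by omega, ?_⟩
      rw [pv_eq0 (m := q + 1) (by omega), show q + 1 - 1 = q from rfl]
      intro hcon
      have : g3 (padicValNat 2 q) = A.x := by rw [← hcon]; decide
      rw [g3_eq_x_iff] at this
      exact h3 this
  · by_cases h3 : padicValNat 2 (q + 1) % 3 = 0
    · have hv : 1 ≤ padicValNat 2 (q + 1) :=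
        (padicValNat_dvd_iff_le (by omega)).mp (by rw [pow_one]; omega)
      have hv3 : 3 ≤ padicValNat 2 (q + 1) := by omega
      have h8 : 2 ^ 3 ∣ (q + 1) := (padicValNat_dvd_iff_le (by omega)).mpr hv3
      rw [show (2:ℕ)^3 = 8 by norm_num] at h8
      have h8' : q % 8 = 7 := by omega
      refine ⟨2, by omega, by omega, ?_⟩
      rw [pv_eq0 (m := q + 2) (by omega), pv_eq1 (m := q + 1 - 2) (by omega)]
      decide
    · refine ⟨1, le_refl _, by omega, ?_⟩
      rw [pv_eq0 (m := q + 1 - 1) (by omega)]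
      intro hcon
      have : g3 (padicValNat 2 (q + 1)) = A.x := by rw [hcon]; decide
      rw [g3_eq_x_iff] at this
      exact h3 this

lemma coe_range (L : ℕ) :
    (do let a ← List.range L; pure (↑a : ℤ)) = (List.range L).map (fun (a : ℕ) => (a : ℤ)) := by
  simp only [bind, pure]
  induction L with
  | zero => rfl
  | succ n ih => rw [List.range_succ, List.flatMap_append, List.map_append, ih]; rfl

lemma window (ω : ℤ → A) (hω : OmegaTau ω) (i : ℤ) (L : ℕ) :
    ∃ i₀ : ℕ, ∀ k : ℕ, k < L → ω (i + k) = eta (i₀ + k) := by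
  obtain ⟨i₀, hi⟩ := hω i L
  refine ⟨i₀, fun k hk => ?_⟩
  rw [coe_range L] at hi
  simp only [List.map_map, List.length_map, List.length_range] at hi
  have hl : k < (List.map ((fun k => ω (i + k)) ∘ fun (a : ℕ) => (a : ℤ)) (List.range L)).length := by
    rw [List.length_map, List.length_range]; exact hk
  have h1 := List.getElem_of_eq hi hl
  simp only [List.getElem_map, List.getElem_range, Function.comp] at h1
  exact h1

/-- If the shift-orbits of `ω ∈ Ω_τ` and of its reflection `ω̃(n) = ω(1-n)`
intersect, i.e. `Tⁿω = Tᵐω̃` for some integers `n, m`, then `ω` is symmetric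
around a point: `ω = T^{-p} ω⁽ˢ⁾` for some `p ∈ ℤ` and `s ∈ {x,y,z}`. -/
theorem orbits_intersect_implies_symmetric (ω : ℤ → A) (hω : OmegaTau ω)
    (h : ∃ n m : ℤ, ∀ k : ℤ, ω (k + n) = ω (1 - (k + m))) :
    ∃ p : ℤ, ∃ s ∈ ({A.x, A.y, A.z} : Set A), ∀ n : ℤ, ω n = omegaS s (n - p) := by
  obtain ⟨n, m, hnm⟩ := h
  set c : ℤ := 1 + n - m with hc
  have pal : ∀ j : ℤ, ω j = ω (c - j) := by
    intro j
    have h1 := hnm (j - n)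
    rw [show j - n + n = j by ring] at h1
    rw [h1]; congr 1; ring
  have aIff : ∀ j : ℤ, (ω j = A.a ↔ ¬ ω (j + 1) = A.a) := by
    intro j
    obtain ⟨i₀, hw⟩ := window ω hω j 2
    have h0 := hw 0 (by norm_num)
    have h1 := hw 1 (by norm_num)
    norm_num at h0 h1
    rw [h0, h1, eta_a_iff, eta_a_iff]
    omega
  have parN : ∀ (j : ℤ) (t : ℕ), (ω (j + 2 * t) = A.a ↔ ω j = A.a) := by
    intro j t
    induction t with
    | zero => norm_num
    | succ t ih =>
      have h1 := aIff (j + 2 * t)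
      have h2 := aIff (j + 2 * t + 1)
      push_cast at ih ⊢
      rw [show j + 2 * ((t : ℤ) + 1) = j + 2 * t + 1 + 1 by ring]
      tauto
  have exa : ω 0 = A.a ∨ ω 1 = A.a := by
    obtain ⟨i₀, hw⟩ := window ω hω 0 2
    have h0 := hw 0 (by norm_num)
    have h1 := hw 1 (by norm_num)
    norm_num at h0 h1
    rcases (by omega : i₀ % 2 = 0 ∨ (i₀ + 1) % 2 = 0) with he | he
    · left; rw [h0, eta_a_iff]; exact he
    · right; rw [h1, eta_a_iff]; exact he
  have gen : ∀ j₀ : ℤ, ω j₀ = A.a → c % 2 = 0 := by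
    intro j₀ hj₀
    by_contra hodd
    have hcj : ω (c - j₀) = A.a := by rw [← pal j₀]; exact hj₀
    have hu : ω (min j₀ (c - j₀)) = A.a ∧ ω (max j₀ (c - j₀)) = A.a := by
      rcases le_total j₀ (c - j₀) with hle | hle
      · rw [min_eq_left hle, max_eq_right hle]; exact ⟨hj₀, hcj⟩
      · rw [min_eq_right hle, max_eq_left hle]; exact ⟨hcj, hj₀⟩
    obtain ⟨t, ht⟩ : ∃ t : ℕ, max j₀ (c - j₀) = min j₀ (c - j₀) + 1 + 2 * (t : ℤ) := by
      refine ⟨((max j₀ (c - j₀) - min j₀ (c - j₀) - 1) / 2).toNat, ?_⟩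
      have hminmax : min j₀ (c - j₀) ≤ max j₀ (c - j₀) := min_le_max
      rcases le_total j₀ (c - j₀) with hle | hle
      · rw [min_eq_left hle, max_eq_right hle] at *; omega
      · rw [min_eq_right hle, max_eq_left hle] at *; omega
    have h1 : ω (min j₀ (c - j₀) + 1) = A.a := by
      rw [← parN (min j₀ (c - j₀) + 1) t, ← ht]; exact hu.2
    exact ((aIff (min j₀ (c - j₀))).mp hu.1) h1
  have hceven : c % 2 = 0 := by rcases exa with h' | h' <;> exact gen _ h'
  obtain ⟨c₀, hc₀⟩ : ∃ c₀ : ℤ, c = 2 * c₀ := ⟨c / 2, by omega⟩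
  have pal' : ∀ j : ℤ, ω (c₀ + j) = ω (c₀ - j) := by
    intro j
    have := pal (c₀ + j)
    rw [this]; congr 1; omega
  have cwin : ∀ R : ℕ, ∃ i₀ : ℕ,
      (∀ j : ℕ, j ≤ R → ω (c₀ + j) = eta (i₀ + R + j)) ∧
      (∀ j : ℕ, j ≤ R → ω (c₀ + j) = eta (i₀ + (R - j))) := by
    intro R
    obtain ⟨i₀, hw⟩ := window ω hω (c₀ - R) (2 * R + 1)
    refine ⟨i₀, fun j hj => ?_, fun j hj => ?_⟩
    · have h1 := hw (R + j) (by omega)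
      rw [show c₀ - (R:ℤ) + ((R + j : ℕ) : ℤ) = c₀ + j by push_cast; ring] at h1
      rw [h1]; congr 1; omega
    · have h1 := hw (R - j) (by omega)
      rw [show c₀ - (R:ℤ) + ((R - j : ℕ) : ℤ) = c₀ - j by push_cast [hj]; ring] at h1
      rw [pal' j]; exact h1
  have hs : ω c₀ ≠ A.a := by
    intro ha
    obtain ⟨i₀, hw1, hw2⟩ := cwin 8
    have hp : ω c₀ = eta (i₀ + 8) := by
      have := hw1 0 (by norm_num); simpa using this
    have hpe : (i₀ + 8) % 2 = 0 := (eta_a_iff _).mp (by rw [← hp]; exact ha)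
    obtain ⟨q, hq⟩ : ∃ q, i₀ + 8 = 2 * q := ⟨(i₀ + 8) / 2, by omega⟩
    obtain ⟨r, hr1, hr2, hne⟩ := V2 q (by omega)
    apply hne
    have hj : (2 * r - 1 : ℕ) ≤ 8 := by omega
    have e1 := hw1 (2 * r - 1) hj
    have e2 := hw2 (2 * r - 1) hj
    have heq : eta (i₀ + 8 + (2 * r - 1)) = eta (i₀ + (8 - (2 * r - 1))) := by
      rw [← e1, e2]
    rw [show i₀ + 8 + (2 * r - 1) = 2 * (q + r - 1) + 1 by omega,
      show i₀ + (8 - (2 * r - 1)) = 2 * (q - r) + 1 by omega, eta_odd, eta_odd,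
      show q + r - 1 + 1 = q + r by omega, show q - r + 1 = q + 1 - r by omega] at heq
    exact heq
  have key : ∀ d : ℕ, 1 ≤ d → ω (c₀ + (d : ℤ)) = eta (d - 1) := by
    intro d hd
    rcases Nat.even_or_odd d with ⟨e, he⟩ | ⟨e, he⟩
    · -- d = 2e, e ≥ 1
      have he' : d = 2 * e := by omega
      have hee : e < 2 ^ e := Nat.lt_two_pow_self (n := e)
      have he1 : 1 ≤ e := by omega
      obtain ⟨i₀, hw1, hw2⟩ := cwin (6 * 2 ^ e)
      have hc0 : ω c₀ = eta (i₀ + 6 * 2 ^ e) := by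
        have := hw1 0 (by omega); simpa using this
      have hpo : (i₀ + 6 * 2 ^ e) % 2 = 1 := by
        have h2 : ¬ eta (i₀ + 6 * 2 ^ e) = A.a := by rw [← hc0]; exact hs
        have h3 : ¬ (i₀ + 6 * 2 ^ e) % 2 = 0 := fun hh => h2 ((eta_a_iff _).mpr hh)
        omega
      obtain ⟨q, hq⟩ : ∃ q, i₀ + 6 * 2 ^ e = 2 * q + 1 := ⟨(i₀ + 6 * 2 ^ e) / 2, by omega⟩
      have hq3 : 3 * 2 ^ e ≤ q := by omega
      have cond : ∀ r' : ℕ, 1 ≤ r' → r' ≤ 3 * 2 ^ e →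
          g3 (padicValNat 2 (q + 1 + r')) = g3 (padicValNat 2 (q + 1 - r')) := by
        intro r' h1 h2
        have hj : 2 * r' ≤ 6 * 2 ^ e := by omega
        have e1 := hw1 (2 * r') hj
        have e2 := hw2 (2 * r') hj
        have heq : eta (i₀ + 6 * 2 ^ e + 2 * r') = eta (i₀ + (6 * 2 ^ e - 2 * r')) := by
          rw [← e1, e2]
        rw [show i₀ + 6 * 2 ^ e + 2 * r' = 2 * (q + r') + 1 by omega,
          show i₀ + (6 * 2 ^ e - 2 * r') = 2 * (q - r') + 1 by omega, eta_odd, eta_odd,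
          show q + r' + 1 = q + 1 + r' by omega, show q - r' + 1 = q + 1 - r' by omega] at heq
        exact heq
      have hN0 : q + 1 ≠ 0 := by omega
      obtain ⟨vv, hvv⟩ : ∃ vv, padicValNat 2 (q + 1) = vv := ⟨_, rfl⟩
      have hvdvd : 2 ^ vv ∣ (q + 1) := hvv ▸ pow_padicValNat_dvd
      obtain ⟨M, hNM⟩ := hvdvd
      have hM0 : M ≠ 0 := by rintro rfl; simp at hNM
      have hModd : M % 2 = 1 := by
        rcases Nat.even_or_odd M with ⟨M', hM'⟩ | hodd
        · exfalso
          apply pow_succ_padicValNat_not_dvd hN0 (p := 2)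
          rw [hvv]
          exact ⟨M', by rw [hNM, hM']; ring⟩
        · rw [Nat.odd_iff] at hodd; exact hodd
      have hrv : e < 2 ^ padicValNat 2 (q + 1) := by
        rw [hvv]
        by_contra hcon
        push_neg at hcon
        have h2e : (1:ℕ) ≤ 2 ^ vv := Nat.one_le_two_pow
        have hM1 : M ≠ 1 := by
          intro h1
          rw [h1, mul_one] at hNM
          omega
        obtain ⟨r'', h1, h2, hne⟩ := V1 vv M hModd hM1
        rw [← hNM] at hne
        have h2' : r'' ≤ 3 * 2 ^ e := by
          have hle : 2 ^ vv ≤ 2 ^ e := by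
            calc 2 ^ vv ≤ e := hcon
            _ ≤ 2 ^ e := le_of_lt hee
          omega
        exact hne (cond r'' h1 h2')
      have e1 := hw1 (2 * e) (by omega)
      rw [show i₀ + 6 * 2 ^ e + 2 * e = 2 * (q + e) + 1 by omega, eta_odd,
        show q + e + 1 = q + 1 + e by omega] at e1
      have hpv : padicValNat 2 (q + 1 + e) = padicValNat 2 e := pv_add (q + 1) e he1 hrv
      rw [hpv] at e1
      rw [show (d : ℤ) = ((2 * e : ℕ) : ℤ) from congrArg _ he']
      rw [e1, show d - 1 = 2 * (e - 1) + 1 by omega, eta_odd,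
        show e - 1 + 1 = e by omega]
    · -- d = 2e + 1
      have ha1 : ω (c₀ + 1) = A.a := by
        have h1 := aIff c₀
        by_contra hcon
        exact hs (h1.mpr (by tauto))
      have h2 : ω (c₀ + 1 + 2 * e) = A.a := (parN (c₀ + 1) e).mpr ha1
      rw [show c₀ + (d : ℤ) = c₀ + 1 + 2 * e by push_cast [he]; ring]
      rw [h2, show d - 1 = 2 * e by omega, eta_even]
  refine ⟨c₀, ω c₀, ?_, ?_⟩
  · rcases hval : ω c₀ with _ | _ | _ | _
    · exact absurd hval hs
    · left; rfl
    · right; left; rfl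
    · right; right; rfl
  · intro nn
    rcases lt_trichotomy nn c₀ with hlt | heq | hgt
    · obtain ⟨d, hd1, hd2⟩ : ∃ d : ℕ, 1 ≤ d ∧ nn = c₀ - (d : ℤ) :=
        ⟨(c₀ - nn).toNat, by omega, by omega⟩
      have hne : nn - c₀ ≠ 0 := by omega
      have hab : (nn - c₀).natAbs = d := by omega
      rw [show omegaS (ω c₀) (nn - c₀) = eta ((nn - c₀).natAbs - 1) from if_neg hne, hab]
      rw [hd2, ← pal' d]
      exact key d hd1
    · subst heq
      rw [sub_self]
      rw [show omegaS (ω nn) 0 = ω nn from if_pos rfl]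
    · obtain ⟨d, hd1, hd2⟩ : ∃ d : ℕ, 1 ≤ d ∧ nn = c₀ + (d : ℤ) :=
        ⟨(nn - c₀).toNat, by omega, by omega⟩
      have hne : nn - c₀ ≠ 0 := by omega
      have hab : (nn - c₀).natAbs = d := by omega
      rw [show omegaS (ω c₀) (nn - c₀) = eta ((nn - c₀).natAbs - 1) from if_neg hne, hab]
      rw [hd2]
      exact key d hd1
end
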